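/- For every vertex v of the integer hull of a knapsack polytope with Δ = ‖a‖_∞, the support size satisfies |supp(v)| ≤ (3/2) · log₂(2.4 · Δ). -/

import Mathlib

/-- The integer hull of the knapsack polytope `{x ≥ 0 : aᵀx = b}`. -/
def knapsackHull {n : ℕ} (a : Fin n → ℤ) (b : ℤ) : Set (Fin n → ℝ) :=
  convexHull ℝ
    {x | ∃ z : Fin n → ℤ, (∀ i, 0 ≤ z i) ∧ (∑ i, a i * z i) = b ∧ x = fun i => (z i : ℝ)}

/-- `v` is a vertex of `P` if `v ∈ P` and `v` is not in the convex hull of `P \ {v}`. -/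
def IsVertex {n : ℕ} (P : Set (Fin n → ℝ)) (v : Fin n → ℝ) : Prop :=
  v ∈ P ∧ v ∉ convexHull ℝ (P \ {v})


lemma aux1 : ∀ s : ℕ, 9 ≤ s → 125 * s^3 ≤ 216 * 2^s := by
  intro s hs
  induction s, hs using Nat.le_induction with
  | base => norm_num
  | succ s hs ih =>
    have h9 : 9 * (s*s) ≤ s * (s*s) := by
      exact Nat.mul_le_mul_right _ hs
    have h2 : (s+1)^3 ≤ 2 * s^3 := by nlinarith
    calc 125 * (s+1)^3 ≤ 125 * (2 * s^3) := by omega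
    _ = 2 * (125 * s^3) := by ring
    _ ≤ 2 * (216 * 2^s) := by omega
    _ = 216 * 2^(s+1) := by ring

lemma aux2 : ∀ s : ℕ, 1 ≤ s → 125 * 4^s * s^3 ≤ 1728 * (2^s - 1)^3 := by
  intro s hs
  rcases le_or_gt s 8 with h | h
  · interval_cases s <;> norm_num
  · have h9 : 9 ≤ s := h
    have h1 := aux1 s h9
    have hs1 : s - 1 + 1 = s := by omega
    have h2s : 2 * 2^(s-1) = 2^s := by rw [← pow_succ', hs1]
    have hone : 1 ≤ 2^(s-1) := Nat.one_le_two_pow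
    have hp : 2^(s-1) ≤ 2^s - 1 := by omega
    have hcube : 2^s * (2^s * 2^s) ≤ 8 * (2^s - 1)^3 := by
      have := Nat.pow_le_pow_left hp 3
      calc 2^s * (2^s * 2^s) = 8 * (2^(s-1))^3 := by rw [← h2s]; ring
      _ ≤ 8 * (2^s-1)^3 := by omega
    have h4 : (4:ℕ)^s = 2^s * 2^s := by
      rw [show (4:ℕ) = 2*2 from rfl, mul_pow]
    calc 125 * 4^s * s^3 = (125 * s^3) * (2^s * 2^s) := by rw [h4]; ring
    _ ≤ (216 * 2^s) * (2^s * 2^s) := Nat.mul_le_mul_right _ h1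
    _ = 216 * (2^s * (2^s * 2^s)) := by ring
    _ ≤ 216 * (8 * (2^s - 1)^3) := Nat.mul_le_mul_left _ hcube
    _ = 1728 * (2^s - 1)^3 := by ring


lemma vertex_mem {n : ℕ} {S : Set (Fin n → ℝ)} {v : Fin n → ℝ}
    (hv : IsVertex (convexHull ℝ S) v) : v ∈ S := by
  by_contra hvS
  have hsub : S ⊆ convexHull ℝ S \ {v} := fun x hx =>
    ⟨subset_convexHull ℝ S hx, fun h => hvS (h ▸ hx)⟩
  exact hv.2 (convexHull_mono hsub hv.1)

section Main
variable {n : ℕ}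

variable {n : ℕ}

lemma subset_sum_inj (a : Fin n → ℤ) (b : ℤ) (z : Fin n → ℤ)
    (hz0 : ∀ i, 0 ≤ z i) (hzb : (∑ i, a i * z i) = b)
    (hv : IsVertex (knapsackHull a b) (fun i => (z i : ℝ)))
    {U V : Finset (Fin n)} (hU : ∀ i ∈ U, z i ≠ 0) (hV : ∀ i ∈ V, z i ≠ 0)
    (hsum : ∑ i ∈ U, a i = ∑ i ∈ V, a i) : U = V := by
  by_contra hUV
  set S : Set (Fin n → ℝ) :=
    {x | ∃ z : Fin n → ℤ, (∀ i, 0 ≤ z i) ∧ (∑ i, a i * z i) = b ∧ x = fun i => (z i : ℝ)} with hS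
  -- the two perturbed points
  set z1 : Fin n → ℤ := fun i => z i - (if i ∈ U then 1 else 0) + (if i ∈ V then 1 else 0) with hz1
  set z2 : Fin n → ℤ := fun i => z i + (if i ∈ U then 1 else 0) - (if i ∈ V then 1 else 0) with hz2
  have hU1 : ∀ i ∈ U, 1 ≤ z i := fun i hi => lt_of_le_of_ne (hz0 i) (Ne.symm (hU i hi))
  have hV1 : ∀ i ∈ V, 1 ≤ z i := fun i hi => lt_of_le_of_ne (hz0 i) (Ne.symm (hV i hi))
  have hz10 : ∀ i, 0 ≤ z1 i := by
    intro i
    have h0 := hz0 i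
    simp only [hz1]
    by_cases hiU : i ∈ U
    · have h1 := hU1 i hiU
      by_cases hiV : i ∈ V <;> simp [hiU, hiV] <;> omega
    · by_cases hiV : i ∈ V <;> simp [hiU, hiV] <;> omega
  have hz20 : ∀ i, 0 ≤ z2 i := by
    intro i
    have h0 := hz0 i
    simp only [hz2]
    by_cases hiV : i ∈ V
    · have h1 := hV1 i hiV
      by_cases hiU : i ∈ U <;> simp [hiU, hiV] <;> omega
    · by_cases hiU : i ∈ U <;> simp [hiU, hiV] <;> omega
  have hite : ∀ W : Finset (Fin n), ∑ i, a i * (if i ∈ W then (1:ℤ) else 0) = ∑ i ∈ W, a i := by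
    intro W
    rw [Finset.sum_congr rfl (fun i _ => mul_ite (i ∈ W) (a i) 1 0)]
    simp [Finset.sum_ite_mem]
  have hb1 : (∑ i, a i * z1 i) = b := by
    simp only [hz1, mul_add, mul_sub, Finset.sum_add_distrib, Finset.sum_sub_distrib,
      hite U, hite V, hzb, hsum]
    ring
  have hb2 : (∑ i, a i * z2 i) = b := by
    simp only [hz2, mul_add, mul_sub, Finset.sum_add_distrib, Finset.sum_sub_distrib,
      hite U, hite V, hzb, hsum]
    ring
  -- a coordinate where U and V differ
  have hne : ¬ ∀ j, (j ∈ U ↔ j ∈ V) := fun h => hUV (Finset.ext h)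
  push_neg at hne
  obtain ⟨j, hj⟩ := hne
  have hj1 : z1 j ≠ z j := by
    simp only [hz1]
    by_cases hjU : j ∈ U <;> by_cases hjV : j ∈ V <;> simp [hjU, hjV] at hj ⊢ <;> omega
  have hj2 : z2 j ≠ z j := by
    simp only [hz2]
    by_cases hjU : j ∈ U <;> by_cases hjV : j ∈ V <;> simp [hjU, hjV] at hj ⊢ <;> omega
  -- the real points
  set x1 : Fin n → ℝ := fun i => (z1 i : ℝ) with hx1
  set x2 : Fin n → ℝ := fun i => (z2 i : ℝ) with hx2
  set vv : Fin n → ℝ := fun i => (z i : ℝ) with hvv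
  have hx1S : x1 ∈ S := ⟨z1, hz10, hb1, rfl⟩
  have hx2S : x2 ∈ S := ⟨z2, hz20, hb2, rfl⟩
  have hx1v : x1 ≠ vv := by
    intro h
    exact hj1 (by exact_mod_cast show ((z1 j : ℝ)) = ((z j : ℝ)) from congrFun h j)
  have hx2v : x2 ≠ vv := by
    intro h
    exact hj2 (by exact_mod_cast show ((z2 j : ℝ)) = ((z j : ℝ)) from congrFun h j)
  have hmem : ∀ x : Fin n → ℝ, x ∈ S → x ≠ vv → x ∈ knapsackHull a b \ {vv} := by
    intro x hxS hxv
    exact ⟨subset_convexHull ℝ S hxS, hxv⟩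
  have hmid : vv = (1/2 : ℝ) • x1 + (1/2 : ℝ) • x2 := by
    funext i
    simp only [hx1, hx2, hz1, hz2, Pi.add_apply, Pi.smul_apply, smul_eq_mul]
    push_cast
    ring
  have : vv ∈ convexHull ℝ (knapsackHull a b \ {vv}) := by
    have hseg : vv ∈ segment ℝ x1 x2 :=
      ⟨1/2, 1/2, by norm_num, by norm_num, by norm_num, hmid.symm⟩
    have : segment ℝ x1 x2 = convexHull ℝ {x1, x2} := (convexHull_pair x1 x2).symm
    rw [this] at hseg
    refine convexHull_mono ?_ hseg
    intro x hx
    rcases hx with h | h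
    · exact h ▸ hmem x1 hx1S hx1v
    · exact h ▸ hmem x2 hx2S hx2v
  exact hv.2 this


end Main




lemma count_lemma {n : ℕ} (a : Fin n → ℤ) (T : Finset (Fin n)) (Δ : ℕ)
    (hΔ : ∀ i, (a i).natAbs ≤ Δ)
    (hinj : ∀ U ⊆ T, ∀ V ⊆ T, (∑ i ∈ U, a i = ∑ i ∈ V, a i) → U = V) :
    2 ^ T.card ≤ T.card * Δ + 1 := by
  set N : ℤ := ∑ i ∈ T, min (a i) 0 with hN
  set P : ℤ := ∑ i ∈ T, max (a i) 0 with hP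
  have hbound : ∀ U ∈ T.powerset, (∑ i ∈ U, a i) ∈ Finset.Icc N P := by
    intro U hU
    rw [Finset.mem_powerset] at hU
    rw [Finset.mem_Icc]
    constructor
    · have h1 : ∑ i ∈ T, min (a i) 0 ≤ ∑ i ∈ U, min (a i) 0 := by
        have := Finset.sum_le_sum_of_subset_of_nonneg hU
          (f := fun i => -min (a i) 0) (fun i _ _ => by simp [min_le_right (a i) 0])
        simp only [Finset.sum_neg_distrib] at this
        linarith
      calc N ≤ ∑ i ∈ U, min (a i) 0 := h1
      _ ≤ ∑ i ∈ U, a i := Finset.sum_le_sum (fun i _ => min_le_left _ _)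
    · calc (∑ i ∈ U, a i) ≤ ∑ i ∈ U, max (a i) 0 :=
            Finset.sum_le_sum (fun i _ => le_max_left _ _)
      _ ≤ P := by
            apply Finset.sum_le_sum_of_subset_of_nonneg hU
            intro i _ _; exact le_max_right _ _
  have hcard : T.powerset.card ≤ (Finset.Icc N P).card := by
    apply Finset.card_le_card_of_injOn (fun U => ∑ i ∈ U, a i) hbound
    intro U hU V hV h
    exact hinj U (Finset.mem_powerset.mp hU) V (Finset.mem_powerset.mp hV) h
  rw [Finset.card_powerset, Int.card_Icc] at hcard
  have hPN : P - N = ∑ i ∈ T, |a i| := by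
    rw [hP, hN, ← Finset.sum_sub_distrib]
    exact Finset.sum_congr rfl (fun i _ => by rw [max_sub_min_eq_abs' (a i) 0, sub_zero])
  have habs : (∑ i ∈ T, |a i|) ≤ (T.card : ℤ) * (Δ : ℤ) := by
    calc (∑ i ∈ T, |a i|) ≤ ∑ _i ∈ T, (Δ : ℤ) := by
          apply Finset.sum_le_sum
          intro i _
          rw [Int.abs_eq_natAbs]
          exact_mod_cast hΔ i
    _ = (T.card : ℤ) * (Δ : ℤ) := by rw [Finset.sum_const, nsmul_eq_mul]
  have hnn : 0 ≤ P + 1 - N := by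
    have : 0 ≤ ∑ i ∈ T, |a i| := Finset.sum_nonneg (fun i _ => abs_nonneg _)
    have hh : P - N = ∑ i ∈ T, |a i| := hPN
    linarith
  have h2 : ((2 ^ T.card : ℕ) : ℤ) ≤ P + 1 - N := by
    rw [← Int.toNat_of_nonneg hnn]
    exact_mod_cast hcard
  have h3 : ((2 ^ T.card : ℕ) : ℤ) ≤ (T.card : ℤ) * (Δ : ℤ) + 1 := by
    have : P + 1 - N = (∑ i ∈ T, |a i|) + 1 := by linarith [hPN]
    rw [this] at h2
    linarith
  exact_mod_cast h3



lemma final_step (s Δ : ℕ) (hΔ1 : 1 ≤ Δ) (h : 2^s ≤ s * Δ + 1) :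
    (s : ℝ) ≤ 3/2 * Real.logb 2 (2.4 * Δ) := by
  have hΔR : (1:ℝ) ≤ (Δ:ℝ) := by exact_mod_cast hΔ1
  have h24 : (1:ℝ) < 2.4 * Δ := by nlinarith
  rcases Nat.eq_zero_or_pos s with hs | hs
  · subst hs
    simp only [Nat.cast_zero]
    have : 0 ≤ Real.logb 2 (2.4 * Δ) := Real.logb_nonneg (by norm_num) h24.le
    linarith
  · have h1 : 2^s - 1 ≤ s * Δ := by omega
    have h2 := aux2 s hs
    have h3 : (2^s - 1)^3 ≤ (s*Δ)^3 := Nat.pow_le_pow_left h1 3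
    have h4 : 125 * 4^s * s^3 ≤ 1728 * Δ^3 * s^3 := by
      calc 125 * 4^s * s^3 ≤ 1728 * (s*Δ)^3 := le_trans h2 (by
            exact Nat.mul_le_mul_left _ h3)
      _ = 1728 * Δ^3 * s^3 := by ring
    have hspos : 0 < s^3 := Nat.pow_pos hs
    have h5 : 125 * 4^s ≤ 1728 * Δ^3 := Nat.le_of_mul_le_mul_right h4 hspos
    -- real version
    have h6 : (4:ℝ)^s ≤ (2.4 * Δ)^3 := by
      have : (125:ℝ) * 4^s ≤ 1728 * (Δ:ℝ)^3 := by exact_mod_cast h5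
      nlinarith
    set x : ℝ := (2:ℝ) ^ ((2 * (s:ℝ)) / 3) with hx
    have hxpos : 0 < x := Real.rpow_pos_of_pos (by norm_num) _
    have hx3 : x ^ (3:ℕ) = (4:ℝ)^s := by
      rw [hx, ← Real.rpow_natCast ((2:ℝ) ^ ((2 * (s:ℝ)) / 3)) 3, ← Real.rpow_mul (by norm_num)]
      norm_num
      rw [show (2:ℝ) * s = ((2*s : ℕ) : ℝ) by push_cast; ring, Real.rpow_natCast,
        pow_mul]
      norm_num
    have h7 : x ≤ 2.4 * Δ := by
      have h0 : (0:ℝ) ≤ 2.4 * Δ := by linarith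
      have : x ^ (3:ℕ) ≤ (2.4 * Δ) ^ (3:ℕ) := by rw [hx3]; exact h6
      exact le_of_pow_le_pow_left₀ (by norm_num) h0 this
    have h8 : Real.logb 2 x ≤ Real.logb 2 (2.4 * Δ) :=
      Real.logb_le_logb_of_le (by norm_num) hxpos h7
    rw [hx, Real.logb_rpow (by norm_num) (by norm_num)] at h8
    linarith


theorem stmt4 {n : ℕ} (a : Fin n → ℤ) (ha : a ≠ 0) (b : ℤ) (v : Fin n → ℝ)
    (hv : IsVertex (knapsackHull a b) v)
    (Δ : ℕ) (hΔ : Δ = Finset.univ.sup fun i => (a i).natAbs) :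
    ((Function.support v).ncard : ℝ) ≤ (3 / 2) * Real.logb 2 (2.4 * Δ) := by
  set S : Set (Fin n → ℝ) :=
    {x | ∃ z : Fin n → ℤ, (∀ i, 0 ≤ z i) ∧ (∑ i, a i * z i) = b ∧ x = fun i => (z i : ℝ)} with hS
  have hv' : IsVertex (convexHull ℝ S) v := hv
  obtain ⟨z, hz0, hzb, hveq⟩ := vertex_mem hv'
  subst hveq
  classical
  set T : Finset (Fin n) := Finset.univ.filter (fun i => z i ≠ 0) with hT
  have hsupp : Function.support (fun i => ((z i : ℝ))) = (T : Set (Fin n)) := by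
    ext i
    simp [hT, Function.mem_support]
  have hcard : (Function.support (fun i => ((z i : ℝ)))).ncard = T.card := by
    rw [hsupp, Set.ncard_coe_finset]
  rw [hcard]
  have hΔle : ∀ i, (a i).natAbs ≤ Δ := by
    intro i
    rw [hΔ]
    exact Finset.le_sup (f := fun i => (a i).natAbs) (Finset.mem_univ i)
  have hΔ1 : 1 ≤ Δ := by
    obtain ⟨i, hi⟩ := Function.ne_iff.mp ha
    have h1 : 1 ≤ (a i).natAbs := Int.natAbs_pos.mpr hi
    exact le_trans h1 (hΔle i)
  have hinj : ∀ U ⊆ T, ∀ V ⊆ T, (∑ i ∈ U, a i = ∑ i ∈ V, a i) → U = V := by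
    intro U hU V hV hsum
    refine subset_sum_inj a b z hz0 hzb hv ?_ ?_ hsum
    · intro i hi
      exact (Finset.mem_filter.mp (hU hi)).2
    · intro i hi
      exact (Finset.mem_filter.mp (hV hi)).2
  have hcount : 2 ^ T.card ≤ T.card * Δ + 1 := count_lemma a T Δ hΔle hinj
  exact final_step T.card Δ hΔ1 hcount
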